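/- arXiv:1204.2376 — 4 statements merged into one kernel-verified Lean document; each statement's English description precedes it below -/
import Mathlib

section
/- Let g : ℝ → ℝ be continuous and strictly decreasing with θ_m B_m > 0, and suppose x* in the open simplex satisfies θ_m B_m g(N x*_m) = θ_{m'} B_{m'} g(N x*_{m'}) for all m, m'. Then x* is the unique maximizer over the simplex {x : x_m ≥ 0, Σ x_m = 1} of L(x) = Σ_m ∫_0^{x_m} θ_m B_m g(Nz) dz. -/
open intervalIntegral Set

/-- Strict concavity key estimate: for continuous strictly decreasing `f`,
`∫_a^b f < f a * (b - a)` when `a ≠ b`. -/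
lemma strictAnti_integral_lt (f : ℝ → ℝ) (hfc : Continuous f) (hf : StrictAnti f)
    (a b : ℝ) (hab : a ≠ b) : (∫ z in a..b, f z) < f a * (b - a) := by
  rcases lt_or_gt_of_ne hab with h | h
  · have : (∫ z in a..b, f z) < ∫ z in a..b, f a := by
      apply integral_lt_integral_of_continuousOn_of_le_of_exists_lt h
        hfc.continuousOn continuousOn_const
        (fun x hx => (hf hx.1).le)
      exact ⟨b, ⟨h.le, le_rfl⟩, hf h⟩
    simpa [mul_comm] using this
  · have h1 : (∫ z in b..a, f a) < ∫ z in b..a, f z := by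
      apply integral_lt_integral_of_continuousOn_of_le_of_exists_lt h
        continuousOn_const hfc.continuousOn
        (fun x hx => hf.antitone hx.2)
      exact ⟨b, ⟨le_rfl, h.le⟩, hf h⟩
    have h2 : (∫ z in b..a, f a) = f a * (a - b) := by simp [mul_comm]
    have h3 : (∫ z in a..b, f z) = -(∫ z in b..a, f z) := intervalIntegral.integral_symm b a
    rw [h2] at h1
    rw [h3]
    linarith

/-- If `x*` in the open simplex equalizes `w m · g(N x*_m)` across channels, then `x*` is the
unique maximizer of `L(x) = ∑_m ∫_0^{x_m} w m g(Nz) dz` over the simplex. -/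
theorem equilibrium_maximizes_potential (M : ℕ) (hM : 1 ≤ M) (g : ℝ → ℝ)
    (hgc : Continuous g) (hg : StrictAnti g) (N : ℝ) (hN : 0 < N)
    (w : Fin M → ℝ) (hw : ∀ m, 0 < w m)
    (xs : Fin M → ℝ) (hpos : ∀ m, 0 < xs m) (hsum : ∑ m, xs m = 1)
    (heq : ∀ m m', w m * g (N * xs m) = w m' * g (N * xs m')) :
    ∀ x : Fin M → ℝ, (∀ m, 0 ≤ x m) → (∑ m, x m) = 1 → x ≠ xs →
      (∑ m, ∫ z in (0:ℝ)..(x m), w m * g (N * z))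
        < ∑ m, ∫ z in (0:ℝ)..(xs m), w m * g (N * z) := by
  intro x hx hxsum hxne
  set m0 : Fin M := ⟨0, hM⟩
  set c : ℝ := w m0 * g (N * xs m0) with hc
  have hanti : ∀ m : Fin M, StrictAnti (fun z => w m * g (N * z)) := by
    intro m a b hab
    exact mul_lt_mul_of_pos_left (hg (by nlinarith)) (hw m)
  have keylt : ∀ m : Fin M, xs m ≠ x m →
      (∫ z in (xs m)..(x m), w m * g (N * z)) < c * (x m - xs m) := by
    intro m h
    have h2 := strictAnti_integral_lt (fun z => w m * g (N * z))
      (by continuity) (hanti m) (xs m) (x m) h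
    calc (∫ z in (xs m)..(x m), w m * g (N * z))
        < w m * g (N * xs m) * (x m - xs m) := h2
      _ = c * (x m - xs m) := by rw [heq m m0]
  have key : ∀ m : Fin M, (∫ z in (xs m)..(x m), w m * g (N * z)) ≤ c * (x m - xs m) := by
    intro m
    rcases eq_or_ne (xs m) (x m) with h | h
    · simp [h]
    · exact (keylt m h).le
  have hint : ∀ m : Fin M, ∀ a b : ℝ,
      IntervalIntegrable (fun z => w m * g (N * z)) MeasureTheory.volume a b := by
    intro m a b
    exact (Continuous.intervalIntegrable (by continuity) a b)
  have hsub : ∀ m : Fin M,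
      (∫ z in (0:ℝ)..(x m), w m * g (N * z)) - (∫ z in (0:ℝ)..(xs m), w m * g (N * z))
        = ∫ z in (xs m)..(x m), w m * g (N * z) := by
    intro m
    exact intervalIntegral.integral_interval_sub_left (hint m 0 (x m)) (hint m 0 (xs m))
  have hne : ∃ m, xs m ≠ x m := by
    by_contra hcon
    push_neg at hcon
    exact hxne (funext fun m => (hcon m).symm)
  obtain ⟨m1, hm1⟩ := hne
  have hlt : (∑ m, ∫ z in (xs m)..(x m), w m * g (N * z)) < ∑ m, c * (x m - xs m) := by
    apply Finset.sum_lt_sum (fun m _ => key m) ⟨m1, Finset.mem_univ m1, keylt m1 hm1⟩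
  have hsum0 : (∑ m, c * (x m - xs m)) = 0 := by
    rw [← Finset.mul_sum, Finset.sum_sub_distrib, hxsum, hsum]
    ring
  have := Finset.sum_congr rfl (fun m (_ : m ∈ Finset.univ) => (hsub m).symm)
  calc (∑ m, ∫ z in (0:ℝ)..(x m), w m * g (N * z))
      = (∑ m, ∫ z in (0:ℝ)..(xs m), w m * g (N * z))
        + ∑ m, ∫ z in (xs m)..(x m), w m * g (N * z) := by
        rw [← Finset.sum_add_distrib]
        refine Finset.sum_congr rfl fun m _ => ?_
        rw [← hsub m]; ring
    _ < (∑ m, ∫ z in (0:ℝ)..(xs m), w m * g (N * z)) + 0 := by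
        exact add_lt_add_of_le_of_lt le_rfl (hsum0 ▸ hlt)
    _ = _ := by ring
end

section
/- Let x(t) be a trajectory of the evolutionary dynamics ẋ_m = α(U(m,x)/Ū(x) − 1) with U(m,x) = θ_m B_m g(N x_m), Ū(x) = (1/M)Σ_m U(m,x) > 0, and α > 0. Then d/dt L(x(t)) = (α/(M Ū(x))) · Σ_{m,m'} (U(m,x) − U(m',x))²/2 ≥ 0, where L(x) = Σ_m ∫_0^{x_m} θ_m B_m g(Nz) dz; equality holds iff U(m,x) = U(m',x) for all m, m'. -/
/-- Along a trajectory of the general evolutionary dynamics `ẋ_m = α(U(m,x)/Ū(x) − 1)` with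
`U(m,x) = w m g(N x_m)` and `Ū(x) = (1/M)∑ U(i,x) > 0`, the potential
`L(x) = ∑_m ∫_0^{x_m} w m g(Nz) dz` satisfies
`dL/dt = (α/(M Ū)) ∑_{m,m'} (U(m,x) − U(m',x))²/2 ≥ 0`, with equality iff all payoffs are
equal. -/
theorem potential_derivative (M : ℕ) (hM : 1 ≤ M) (α N : ℝ) (hα : 0 < α) (hN : 0 < N)
    (w : Fin M → ℝ) (hw : ∀ m, 0 < w m)
    (g : ℝ → ℝ) (hgc : Continuous g) (hgpos : ∀ z, 0 < g z) (hganti : Antitone g)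
    (x : ℝ → Fin M → ℝ) (t : ℝ)
    (hUbar : 0 < (1 / (M : ℝ)) * ∑ i, w i * g (N * x t i))
    (hode : ∀ m, HasDerivAt (fun s => x s m)
      (α * (w m * g (N * x t m)
        / ((1 / (M : ℝ)) * ∑ i, w i * g (N * x t i)) - 1)) t) :
    HasDerivAt (fun s => ∑ m, ∫ z in (0:ℝ)..(x s m), w m * g (N * z))
        (α / ((M : ℝ) * ((1 / (M : ℝ)) * ∑ i, w i * g (N * x t i)))
          * ∑ m, ∑ m', (w m * g (N * x t m) - w m' * g (N * x t m')) ^ 2 / 2) t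
    ∧ 0 ≤ α / ((M : ℝ) * ((1 / (M : ℝ)) * ∑ i, w i * g (N * x t i)))
          * ∑ m, ∑ m', (w m * g (N * x t m) - w m' * g (N * x t m')) ^ 2 / 2
    ∧ (α / ((M : ℝ) * ((1 / (M : ℝ)) * ∑ i, w i * g (N * x t i)))
          * ∑ m, ∑ m', (w m * g (N * x t m) - w m' * g (N * x t m')) ^ 2 / 2 = 0
        ↔ ∀ m m', w m * g (N * x t m) = w m' * g (N * x t m')) := by
  set U : Fin M → ℝ := fun m => w m * g (N * x t m) with hU
  set Ub : ℝ := (1 / (M : ℝ)) * ∑ i, U i with hUb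
  have hMpos : (0 : ℝ) < (M : ℝ) := by exact_mod_cast hM
  have hcoef : 0 < α / ((M : ℝ) * Ub) := div_pos hα (mul_pos hMpos hUbar)
  have hSsum : ∀ m : Fin M, HasDerivAt (fun s => ∫ z in (0:ℝ)..(x s m), w m * g (N * z))
      (U m * (α * (U m / Ub - 1))) t := by
    intro m
    have hc : Continuous (fun z => w m * g (N * z)) :=
      continuous_const.mul (hgc.comp (continuous_const.mul continuous_id))
    have hF : HasDerivAt (fun y => ∫ z in (0:ℝ)..y, w m * g (N * z)) (U m) (x t m) :=
      (hc.integral_hasStrictDerivAt 0 (x t m)).hasDerivAt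
    exact hF.comp t (hode m)
  have hL : HasDerivAt (fun s => ∑ m, ∫ z in (0:ℝ)..(x s m), w m * g (N * z))
      (∑ m, U m * (α * (U m / Ub - 1))) t := HasDerivAt.fun_sum fun m _ => hSsum m
  -- algebraic identity
  have hkey : (∑ m, U m * (α * (U m / Ub - 1)))
      = α / ((M : ℝ) * Ub) * ∑ m, ∑ m', (U m - U m') ^ 2 / 2 := by
    have hS : (∑ i, U i) = (M : ℝ) * Ub := by
      rw [hUb]; field_simp
    have hexp : (∑ m, ∑ m', (U m - U m') ^ 2 / 2)
        = (M : ℝ) * (∑ m, U m ^ 2) - (∑ m, U m) ^ 2 := by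
      have h1 : ∀ m : Fin M, (∑ m', (U m - U m') ^ 2 / 2)
          = (M : ℝ) * ((U m) ^ 2 / 2) + (∑ i, (U i) ^ 2 / 2) - U m * ∑ i, U i := by
        intro m
        have : ∀ m' : Fin M, (U m - U m') ^ 2 / 2
            = (U m) ^ 2 / 2 + ((U m') ^ 2 / 2 - U m * U m') := by intro m'; ring
        rw [Finset.sum_congr rfl fun m' _ => this m', Finset.sum_add_distrib,
          Finset.sum_sub_distrib, Finset.sum_const, Finset.card_univ, Fintype.card_fin,
          nsmul_eq_mul, ← Finset.mul_sum]
        ring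
      rw [Finset.sum_congr rfl fun m _ => h1 m, Finset.sum_sub_distrib,
        Finset.sum_add_distrib, Finset.sum_const, Finset.card_univ, Fintype.card_fin,
        nsmul_eq_mul, ← Finset.mul_sum, ← Finset.sum_mul]
      have hsq : (∑ m, (U m) ^ 2 / 2) = (∑ m, (U m) ^ 2) / 2 := by
        rw [Finset.sum_div]
      have hsq2 : (∑ m : Fin M, (U m) ^ 2 / 2 : ℝ) = (∑ m, (U m) ^ 2) / 2 := hsq
      rw [hsq2]
      ring
    have hUbne : Ub ≠ 0 := ne_of_gt hUbar
    have hMne : (M : ℝ) ≠ 0 := ne_of_gt hMpos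
    have hLHS : (∑ m, U m * (α * (U m / Ub - 1)))
        = α / Ub * (∑ m, (U m) ^ 2) - α * ∑ m, U m := by
      have : ∀ m : Fin M, U m * (α * (U m / Ub - 1))
          = α / Ub * (U m) ^ 2 - α * U m := by intro m; field_simp
      rw [Finset.sum_congr rfl fun m _ => this m, Finset.sum_sub_distrib,
        ← Finset.mul_sum, ← Finset.mul_sum]
    rw [hLHS, hexp, hS]
    field_simp
  refine ⟨hkey ▸ hL, ?_, ?_⟩
  · exact mul_nonneg hcoef.le (Finset.sum_nonneg fun m _ => Finset.sum_nonneg fun m' _ =>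
      div_nonneg (sq_nonneg _) (by norm_num))
  · constructor
    · intro h m m'
      have hsum0 : (∑ m, ∑ m', (U m - U m') ^ 2 / 2) = 0 := by
        rcases mul_eq_zero.1 h with h0 | h0
        · exact absurd h0 hcoef.ne'
        · exact h0
      have h1 := (Finset.sum_eq_zero_iff_of_nonneg (fun m _ => Finset.sum_nonneg
        fun m' _ => div_nonneg (sq_nonneg (U m - U m')) (by norm_num))).1 hsum0 m (Finset.mem_univ m)
      have h2 := (Finset.sum_eq_zero_iff_of_nonneg (fun m' _ =>
        div_nonneg (sq_nonneg (U m - U m')) (by norm_num))).1 h1 m' (Finset.mem_univ m')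
      have : (U m - U m') ^ 2 = 0 := by linarith
      have := pow_eq_zero_iff (n := 2) (by norm_num) |>.1 this
      exact sub_eq_zero.1 this
    · intro h
      have : (∑ m, ∑ m', (U m - U m') ^ 2 / 2) = 0 :=
        Finset.sum_eq_zero fun m _ => Finset.sum_eq_zero fun m' _ => by
          have hmm : U m = U m' := h m m'
          rw [hmm]; ring
      rw [this, mul_zero]
end

section
/- In the asymptotic case g(k) = 1/k: if the population state x* satisfies x*_m = θ_m B_m / Σ_i θ_i B_i for all m (with N x*_m ≥ 1 integers), then every user's expected payoff equals (Σ_i θ_i B_i)/N, and the payoff of a unilateral deviator to channel a is θ_a B_a/(N x*_a + 1) < (Σ_i θ_i B_i)/N; hence x* is a strict Nash equilibrium. -/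
/-- Asymptotic case `g(k) = 1/k`: at the state `x*_m = θ_m B_m / ∑ θ_i B_i` (with `N x*_m ≥ 1`
integers), every user's payoff equals `(∑ θ_i B_i)/N`, and a unilateral deviator to channel `a`
gets `θ_a B_a/(N x*_a + 1) < (∑ θ_i B_i)/N`; hence `x*` is a strict Nash equilibrium. -/
theorem asymptotic_strict_nash (M N : ℕ) (hM : 1 ≤ M) (hN : 1 ≤ N)
    (θ B : Fin M → ℝ) (hθ : ∀ m, θ m ∈ Set.Ioo (0:ℝ) 1) (hB : ∀ m, 0 < B m)
    (hint : ∀ m, ∃ km : ℕ, 1 ≤ km ∧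
      (km : ℝ) = (N : ℝ) * (θ m * B m / ∑ i, θ i * B i)) :
    (∀ m, θ m * B m / ((N : ℝ) * (θ m * B m / ∑ i, θ i * B i))
        = (∑ i, θ i * B i) / (N : ℝ)) ∧
    ∀ a, θ a * B a / ((N : ℝ) * (θ a * B a / ∑ i, θ i * B i) + 1)
        < (∑ i, θ i * B i) / (N : ℝ) := by
  have hpos : ∀ m, 0 < θ m * B m := fun m => mul_pos (hθ m).1 (hB m)
  have hS : 0 < ∑ i, θ i * B i := by
    apply Finset.sum_pos (fun i _ => hpos i)
    haveI : Nonempty (Fin M) := Fin.pos_iff_nonempty.mp hM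
    exact Finset.univ_nonempty
  have hNpos : (0:ℝ) < N := by exact_mod_cast hN
  have heq : ∀ m, θ m * B m / ((N : ℝ) * (θ m * B m / ∑ i, θ i * B i))
      = (∑ i, θ i * B i) / (N : ℝ) := by
    intro m
    have := hpos m
    have hθ0 : θ m ≠ 0 := (hθ m).1.ne'
    have hB0 : B m ≠ 0 := (hB m).ne'
    field_simp
  refine ⟨heq, fun a => ?_⟩
  have hk : 0 < (N : ℝ) * (θ a * B a / ∑ i, θ i * B i) :=
    mul_pos hNpos (div_pos (hpos a) hS)
  calc θ a * B a / ((N : ℝ) * (θ a * B a / ∑ i, θ i * B i) + 1)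
      < θ a * B a / ((N : ℝ) * (θ a * B a / ∑ i, θ i * B i)) :=
        div_lt_div_of_pos_left (hpos a) hk (by linarith)
    _ = (∑ i, θ i * B i) / (N : ℝ) := heq a
end

section
/- Let f be a probability vector over M channels with f_m > 0 for all m, and suppose Φ_m(f) − Φ_i(f) = Q_m(f) − Q_i(f) for all m, i. Then dΦ/dT along the dynamics ḟ_m = f_m(Q_m(f) − Σ_i f_i Q_i(f)) equals (1/2) Σ_{i,j} f_i f_j (Q_i(f) − Q_j(f))² ≥ 0, with equality iff Q_m(f) = Q_i(f) for all m, i. -/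
/-- If `f` is a fully-mixed probability vector and `Φ_m − Φ_i = Q_m − Q_i` for all `m, i`,
then the derivative of the potential along the learning dynamics
`ḟ_m = f_m(Q_m − ∑_i f_i Q_i)`, namely `∑_m Φ_m ḟ_m`, equals
`(1/2) ∑_{i,j} f_i f_j (Q_i − Q_j)² ≥ 0`, with equality iff all `Q_m` are equal. -/
theorem potential_increasing (M : ℕ) (f Q Φ : Fin M → ℝ)
    (hf : ∀ m, 0 < f m) (hsum : ∑ m, f m = 1)
    (hΦQ : ∀ m i, Φ m - Φ i = Q m - Q i) :
    (∑ m, Φ m * (f m * (Q m - ∑ i, f i * Q i))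
        = (1 / 2) * ∑ i, ∑ j, f i * f j * (Q i - Q j) ^ 2)
    ∧ 0 ≤ (1 / 2) * ∑ i, ∑ j, f i * f j * (Q i - Q j) ^ 2
    ∧ ((1 / 2) * ∑ i, ∑ j, f i * f j * (Q i - Q j) ^ 2 = 0 ↔ ∀ m i, Q m = Q i) := by
  have hnn : ∀ i ∈ Finset.univ, ∀ j ∈ (Finset.univ : Finset (Fin M)),
      0 ≤ f i * f j * (Q i - Q j) ^ 2 := by
    intro i _ j _
    exact mul_nonneg (mul_nonneg (hf i).le (hf j).le) (sq_nonneg _)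
  refine ⟨?_, ?_, ?_⟩
  · rcases Nat.eq_zero_or_pos M with hM | hM
    · subst hM; simp
    · set i0 : Fin M := ⟨0, hM⟩
      set c : ℝ := Φ i0 - Q i0 with hc0
      have hc : ∀ m, Φ m = Q m + c := by
        intro m; have := hΦQ m i0; simp [hc0]; linarith
      set S1 : ℝ := ∑ i, f i * Q i with hS1
      set S2 : ℝ := ∑ i, f i * Q i ^ 2 with hS2
      have key2 : ∑ i, ∑ j, f i * f j * (Q i - Q j) ^ 2
          = S2 * (∑ j, f j) + (∑ i, f i) * S2 - 2 * (S1 * S1) := by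
        rw [hS2, hS1, Finset.sum_mul_sum, Finset.sum_mul_sum, Finset.sum_mul_sum,
          ← Finset.sum_add_distrib, Finset.mul_sum, ← Finset.sum_sub_distrib]
        apply Finset.sum_congr rfl; intro i _
        rw [Finset.mul_sum, ← Finset.sum_add_distrib, ← Finset.sum_sub_distrib]
        apply Finset.sum_congr rfl; intro j _; ring
      have keyL : ∑ m, Φ m * (f m * (Q m - S1)) = S2 - S1 * S1 := by
        have hpt : ∀ m, Φ m * (f m * (Q m - S1)) =
            (f m * Q m ^ 2) - (f m * Q m) * S1 + (c * (f m * Q m) - c * (f m * S1)) := by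
          intro m; rw [hc m]; ring
        rw [Finset.sum_congr rfl (fun m _ => hpt m), Finset.sum_add_distrib,
          Finset.sum_sub_distrib, Finset.sum_sub_distrib, ← Finset.sum_mul,
          ← Finset.mul_sum, ← Finset.mul_sum, ← Finset.sum_mul, hsum]
        rw [← hS1, ← hS2]; ring
      rw [keyL, key2, hsum]; ring
  · apply mul_nonneg (by norm_num)
    exact Finset.sum_nonneg fun i hi => Finset.sum_nonneg (hnn i hi)
  · constructor
    · intro h m i
      have h0 : ∑ i, ∑ j, f i * f j * (Q i - Q j) ^ 2 = 0 := by linarith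
      have := (Finset.sum_eq_zero_iff_of_nonneg
        (fun i hi => Finset.sum_nonneg (hnn i hi))).mp h0 m (Finset.mem_univ m)
      have := (Finset.sum_eq_zero_iff_of_nonneg (hnn m (Finset.mem_univ m))).mp
        this i (Finset.mem_univ i)
      have hfm := hf m; have hfi := hf i
      have h2 : (Q m - Q i) ^ 2 = 0 := by
        by_contra hne
        have hp : 0 < (Q m - Q i) ^ 2 := lt_of_le_of_ne (sq_nonneg _) (Ne.symm hne)
        exact absurd ‹f m * f i * (Q m - Q i) ^ 2 = 0›
          (ne_of_gt (mul_pos (mul_pos hfm hfi) hp))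
      have := sq_eq_zero_iff.mp h2
      linarith
    · intro h
      have : ∀ i ∈ Finset.univ, ∑ j, f i * f j * (Q i - Q j) ^ 2 = 0 := by
        intro i _
        apply Finset.sum_eq_zero; intro j _
        rw [h i j]; ring
      rw [Finset.sum_eq_zero this]; ring
end
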